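/- Let ρ = |x⟩⟨x| and σ = |y⟩⟨y| be pure states on ℂ^d (x, y unit vectors) with a = |⟨x|y⟩|² satisfying 0 < a < 1. For p ∈ [0,1] define α^q(p) = (2(1−p)a − 1 + √(1 − 4p(1−p)a)) / (2√(1 − 4p(1−p)a)) and β^q(p) = (2pa − 1 + √(1 − 4p(1−p)a)) / (2√(1 − 4p(1−p)a)). Then for every p ∈ [0,1] the pair (α^q(p), β^q(p)) lies on the Pareto-optimal boundary, i.e. β_{α^q(p)}(ρ,σ) = β^q(p), and the map p ↦ (α^q(p), β^q(p)) is injective on [0,1]. -/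

import Mathlib

open Matrix BigOperators ComplexOrder

noncomputable section

set_option maxHeartbeats 1000000

/-- The optimal quantum type-II error trade-off. -/
def qBeta {d : ℕ} (α : ℝ) (ρ σ : Matrix (Fin d) (Fin d) ℂ) : ℝ :=
  sInf { b : ℝ | ∃ T : Matrix (Fin d) (Fin d) ℂ,
    T.PosSemidef ∧ (1 - T).PosSemidef ∧ ((T * ρ).trace.re ≤ α) ∧
    b = 1 - (T * σ).trace.re }

/-- Type-I error of the optimal pure-state test, parametrized by `p`. -/
def alphaQ (p a : ℝ) : ℝ :=
  (2 * (1 - p) * a - 1 + Real.sqrt (1 - 4 * p * (1 - p) * a)) /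
    (2 * Real.sqrt (1 - 4 * p * (1 - p) * a))

/-- Type-II error of the optimal pure-state test, parametrized by `p`. -/
def betaQ (p a : ℝ) : ℝ :=
  (2 * p * a - 1 + Real.sqrt (1 - 4 * p * (1 - p) * a)) /
    (2 * Real.sqrt (1 - 4 * p * (1 - p) * a))

/-! ### Scalar auxiliary lemmas -/

lemma psb_key_aux (A B C D p1 p2 q1 q2 c s : ℝ)
    (hA : 0 ≤ A) (hB : 0 ≤ B) (hC : 0 ≤ C) (hD : 0 ≤ D)
    (hp1 : 0 ≤ p1) (hp2 : 0 ≤ p2) (hq1 : 0 ≤ q1) (hq2 : 0 ≤ q2)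
    (hAB : A^2 + B^2 = 1) (hCD : C^2 + D^2 = 1) (hp : p1^2 + p2^2 = 1)
    (hq : q1^2 + q2^2 = 1) (hCA : C ≤ A) (hpC : p1 ≤ C)
    (hq1eq : q1 = p1*c + p2*s) (hcs : c^2 + s^2 = 1) (hcA : A ≤ c) :
    q1 ≤ A*C + B*D := by
  have hA1 : A ≤ 1 := by nlinarith
  have hC1 : C ≤ 1 := by nlinarith
  have hcnn : 0 ≤ c := le_trans hA hcA
  have hc1 : c ≤ 1 := by nlinarith [sq_nonneg s]
  have hBD : B ≤ D := by nlinarith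
  rcases le_or_gt s 0 with hsneg | hspos
  · have h1 : q1 ≤ C := by nlinarith
    have h2 : C ≤ A*C + B*D := by nlinarith
    linarith
  · have hsB : s ≤ B := by nlinarith
    have step1 : q1 ≤ C*c + D*s := by
      have k1 : p1*s ≤ c*p2 := by nlinarith
      have k2 : C*s ≤ c*D := by nlinarith
      have key : 0 ≤ (C - p1) * (c*(p2+D) - (C+p1)*s) := by
        have h0 : 0 ≤ c*(p2+D) - (C+p1)*s := by nlinarith
        have h1 : 0 ≤ C - p1 := by linarith
        positivity
      nlinarith [sq_nonneg (p2 - D), sq_nonneg (p2 + D)]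
    have step2 : C*c + D*s ≤ A*C + B*D := by
      have k1 : C*B ≤ A*D := by nlinarith
      have k2 : C*s ≤ c*D := by nlinarith
      have key : (c - A) * (C*(B+s) - D*(c+A)) ≤ 0 := by
        have h1 : C*(B+s) ≤ D*(c+A) := by nlinarith
        have h2 : 0 ≤ c - A := by linarith
        nlinarith
      nlinarith [sq_nonneg (B - s), sq_nonneg (B + s)]
    linarith

lemma psb_key_ineq (A B C D p1 p2 q1 q2 : ℝ)
    (hA : 0 ≤ A) (hB : 0 ≤ B) (hC : 0 ≤ C) (hD : 0 ≤ D)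
    (hp1 : 0 ≤ p1) (hp2 : 0 ≤ p2) (hq1 : 0 ≤ q1) (hq2 : 0 ≤ q2)
    (hAB : A^2 + B^2 = 1) (hCD : C^2 + D^2 = 1) (hp : p1^2 + p2^2 = 1)
    (hq : q1^2 + q2^2 = 1) (hCA : C ≤ A) (hpC : p1 ≤ C)
    (hmain : A ≤ p1*q1 + p2*q2) : q1 ≤ A*C + B*D := by
  refine psb_key_aux A B C D p1 p2 q1 q2 (p1*q1+p2*q2) (p2*q1-p1*q2) hA hB hC hD
    hp1 hp2 hq1 hq2 hAB hCD hp hq hCA hpC ?_ ?_ hmain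
  · nlinarith [hp]
  · nlinarith [hp, hq]

section scalars
variable {p a : ℝ} (hp0 : 0 ≤ p) (hp1 : p ≤ 1) (ha0 : 0 < a) (ha1 : a < 1)

include hp0 hp1 ha0 ha1 in
lemma disc_pos : 0 < 1 - 4*p*(1-p)*a := by
  nlinarith [mul_nonneg (sq_nonneg (2*p-1)) ha0.le]

include hp0 hp1 ha0 ha1 in
lemma alphaQ_nonneg : 0 ≤ alphaQ p a := by
  have hd := disc_pos hp0 hp1 ha0 ha1
  set s := Real.sqrt (1 - 4*p*(1-p)*a) with hs
  have hs0 : 0 < s := Real.sqrt_pos.mpr hd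
  have hs2 : s^2 = 1 - 4*p*(1-p)*a := Real.sq_sqrt hd.le
  have hfac : s^2 - (1 - 2*(1-p)*a)^2 = 4*(1-p)^2*a*(1-a) := by rw [hs2]; ring
  have hnum : 0 ≤ 2*(1-p)*a - 1 + s := by
    by_contra h
    push_neg at h
    have h1 : 0 < 1 - 2*(1-p)*a := by linarith
    nlinarith [hfac, mul_nonneg (mul_nonneg (sq_nonneg (1-p)) ha0.le)
      (by linarith : (0:ℝ) ≤ 1-a)]
  unfold alphaQ
  rw [← hs]
  positivity

include hp0 hp1 ha0 ha1 in
lemma sqrtdisc_le_one : Real.sqrt (1 - 4*p*(1-p)*a) ≤ 1 := by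
  have h : 1 - 4*p*(1-p)*a ≤ 1 := by
    nlinarith [mul_nonneg (mul_nonneg hp0 (by linarith : (0:ℝ) ≤ 1-p)) ha0.le]
  calc Real.sqrt (1 - 4*p*(1-p)*a) ≤ Real.sqrt 1 := Real.sqrt_le_sqrt h
  _ = 1 := Real.sqrt_one

include hp0 hp1 ha0 ha1 in
lemma alphaQ_le : alphaQ p a ≤ a := by
  have hd := disc_pos hp0 hp1 ha0 ha1
  have hs1 := sqrtdisc_le_one hp0 hp1 ha0 ha1
  set s := Real.sqrt (1 - 4*p*(1-p)*a) with hs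
  have hs0 : 0 < s := Real.sqrt_pos.mpr hd
  have hs2 : s^2 = 1 - 4*p*(1-p)*a := Real.sq_sqrt hd.le
  have hE : (1 - 2*(1-p)*a)^2 - s^2*(1-2*a)^2 = 4*a*p*(1-a)*(2 - p - 4*a*(1-p)) := by
    rw [hs2]; ring
  have key : s*(1-2*a) ≤ 1 - 2*(1-p)*a := by
    rcases le_or_gt a (1/2) with h | h
    · have hx : 0 ≤ 1 - 2*(1-p)*a := by nlinarith
      have hEpos : 0 ≤ 4*a*p*(1-a)*(2 - p - 4*a*(1-p)) := by
        have h0 : 0 ≤ 2 - p - 4*a*(1-p) := by nlinarith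
        have h2 : 0 ≤ 4*a*p*(1-a) := by
          apply mul_nonneg (by nlinarith) (by linarith)
        exact mul_nonneg h2 h0
      by_contra hcon
      push_neg at hcon
      have hL : 0 ≤ s*(1-2*a) := mul_nonneg hs0.le (by linarith)
      nlinarith [hE, hEpos]
    · rcases le_or_gt (2*(1-p)*a) 1 with h2 | h2
      · nlinarith
      · have hEneg : 4*a*p*(1-a)*(2 - p - 4*a*(1-p)) ≤ 0 := by
          have hneg : 2 - p - 4*a*(1-p) ≤ 0 := by nlinarith
          have h3 : 0 ≤ 4*a*p*(1-a) := by
            apply mul_nonneg (by nlinarith) (by linarith)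
          exact mul_nonpos_of_nonneg_of_nonpos h3 hneg
        by_contra hcon
        push_neg at hcon
        have hL : s*(1-2*a) ≤ 0 := mul_nonpos_of_nonneg_of_nonpos hs0.le (by linarith)
        nlinarith [hE, hEneg]
  unfold alphaQ
  rw [← hs, div_le_iff₀ (by positivity)]
  nlinarith

include hp0 hp1 ha0 ha1 in
lemma sqrt_alpha_mul :
    Real.sqrt (alphaQ p a * (1 - alphaQ p a))
      = (1-p) * Real.sqrt (a*(1-a)) / Real.sqrt (1 - 4*p*(1-p)*a) := by
  have hd := disc_pos hp0 hp1 ha0 ha1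
  set s := Real.sqrt (1 - 4*p*(1-p)*a) with hs
  have hs0 : 0 < s := Real.sqrt_pos.mpr hd
  have hs2 : s^2 = 1 - 4*p*(1-p)*a := Real.sq_sqrt hd.le
  have hw : (Real.sqrt (a*(1-a)))^2 = a*(1-a) :=
    Real.sq_sqrt (by nlinarith)
  have key : (2*(1-p)*a - 1 + s) * (2*s - (2*(1-p)*a - 1 + s)) = 4*(1-p)^2*(a*(1-a)) := by
    linear_combination hs2
  have h1 : alphaQ p a * (1 - alphaQ p a) = ((1-p) * Real.sqrt (a*(1-a)) / s)^2 := by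
    rw [div_pow, mul_pow, hw]
    unfold alphaQ
    rw [← hs]
    field_simp
    linear_combination (2*s^2) * key + (1 - 2*s^2) * hs2
  rw [h1]
  exact Real.sqrt_sq (div_nonneg (mul_nonneg (by linarith) (Real.sqrt_nonneg _)) hs0.le)

include hp0 hp1 ha0 ha1 in
lemma one_sub_betaQ :
    1 - betaQ p a
      = (Real.sqrt a * Real.sqrt (alphaQ p a)
          + Real.sqrt (1-a) * Real.sqrt (1 - alphaQ p a))^2 := by
  have hd := disc_pos hp0 hp1 ha0 ha1
  have hα0 : 0 ≤ alphaQ p a := alphaQ_nonneg hp0 hp1 ha0 ha1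
  have hα1 : alphaQ p a ≤ 1 := le_trans (alphaQ_le hp0 hp1 ha0 ha1) ha1.le
  set s := Real.sqrt (1 - 4*p*(1-p)*a) with hs
  have hs0 : 0 < s := Real.sqrt_pos.mpr hd
  have hs2 : s^2 = 1 - 4*p*(1-p)*a := Real.sq_sqrt hd.le
  have expand : (Real.sqrt a * Real.sqrt (alphaQ p a)
          + Real.sqrt (1-a) * Real.sqrt (1 - alphaQ p a))^2
      = a * alphaQ p a + (1-a)*(1 - alphaQ p a)
        + 2 * (Real.sqrt a * Real.sqrt (1-a))
            * (Real.sqrt (alphaQ p a) * Real.sqrt (1 - alphaQ p a)) := by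
    have h1 : (Real.sqrt a)^2 = a := Real.sq_sqrt ha0.le
    have h2 : (Real.sqrt (1-a))^2 = 1-a := Real.sq_sqrt (by linarith)
    have h3 : (Real.sqrt (alphaQ p a))^2 = alphaQ p a := Real.sq_sqrt hα0
    have h4 : (Real.sqrt (1 - alphaQ p a))^2 = 1 - alphaQ p a := Real.sq_sqrt (by linarith)
    ring_nf
    nlinarith [h1, h2, h3, h4]
  rw [expand]
  have hm1 : Real.sqrt a * Real.sqrt (1-a) = Real.sqrt (a*(1-a)) :=
    (Real.sqrt_mul ha0.le _).symm
  have hm2 : Real.sqrt (alphaQ p a) * Real.sqrt (1 - alphaQ p a)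
      = Real.sqrt (alphaQ p a * (1 - alphaQ p a)) := (Real.sqrt_mul hα0 _).symm
  rw [hm1, hm2, sqrt_alpha_mul hp0 hp1 ha0 ha1, ← hs]
  have hw2 : (Real.sqrt (a*(1-a)))^2 = a*(1-a) := Real.sq_sqrt (by nlinarith)
  have hprod : 2 * Real.sqrt (a*(1-a)) * ((1-p) * Real.sqrt (a*(1-a)) / s)
      = 2*(1-p)*(a*(1-a))/s := by
    have h5 : 2 * Real.sqrt (a*(1-a)) * ((1-p) * Real.sqrt (a*(1-a)) / s)
        = 2 * (Real.sqrt (a*(1-a)))^2 * (1-p) / s := by ring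
    rw [h5, hw2]; ring
  rw [hprod]
  unfold alphaQ betaQ
  rw [← hs]
  field_simp
  ring

end scalars

/-! ### Matrix auxiliary lemmas -/

variable {d : ℕ}

lemma dot_cs (v w : Fin d → ℂ) :
    Complex.normSq (star v ⬝ᵥ w) ≤ (star v ⬝ᵥ v).re * (star w ⬝ᵥ w).re := by
  set v' : EuclideanSpace ℂ (Fin d) := (WithLp.equiv 2 (Fin d → ℂ)).symm v with hv'
  set w' : EuclideanSpace ℂ (Fin d) := (WithLp.equiv 2 (Fin d → ℂ)).symm w with hw'
  have h1 : star v ⬝ᵥ w = inner (𝕜 := ℂ) v' w' := by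
    rw [EuclideanSpace.inner_eq_star_dotProduct]
    simp [hv', hw']
    exact dotProduct_comm _ _
  have h2 : star v ⬝ᵥ v = inner (𝕜 := ℂ) v' v' := by
    rw [EuclideanSpace.inner_eq_star_dotProduct]; simp [hv']; exact dotProduct_comm _ _
  have h3 : star w ⬝ᵥ w = inner (𝕜 := ℂ) w' w' := by
    rw [EuclideanSpace.inner_eq_star_dotProduct]; simp [hw']; exact dotProduct_comm _ _
  have hvv : (star v ⬝ᵥ v).re = ‖v'‖^2 := by
    rw [h2]; simpa using inner_self_eq_norm_sq (𝕜 := ℂ) v'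
  have hww : (star w ⬝ᵥ w).re = ‖w'‖^2 := by
    rw [h3]; simpa using inner_self_eq_norm_sq (𝕜 := ℂ) w'
  rw [h1, hvv, hww]
  calc Complex.normSq (inner (𝕜 := ℂ) v' w')
      = ‖(inner (𝕜 := ℂ) v' w' : ℂ)‖^2 := Complex.normSq_eq_norm_sq _
  _ ≤ (‖v'‖ * ‖w'‖)^2 := pow_le_pow_left₀ (norm_nonneg _) (norm_inner_le_norm _ _) 2
  _ = _ := by ring

lemma trace_mul_vecMulVec (M : Matrix (Fin d) (Fin d) ℂ) (w : Fin d → ℂ) :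
    (M * vecMulVec w (star w)).trace = star w ⬝ᵥ (M *ᵥ w) := by
  simp only [Matrix.trace, Matrix.diag_apply, Matrix.mul_apply, vecMulVec_apply,
    dotProduct, Matrix.mulVec, Pi.star_apply]
  congr 1
  ext i
  rw [Finset.mul_sum]
  congr 1
  ext j
  ring

lemma psd_cs {T : Matrix (Fin d) (Fin d) ℂ} (hT : T.PosSemidef) (v w : Fin d → ℂ) :
    Complex.normSq (star v ⬝ᵥ T *ᵥ w)
      ≤ (star v ⬝ᵥ T *ᵥ v).re * (star w ⬝ᵥ T *ᵥ w).re := by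
  obtain ⟨B, rfl⟩ : ∃ B : Matrix (Fin d) (Fin d) ℂ, T = Bᴴ * B := by
    open MatrixOrder in
    obtain ⟨B, hB⟩ := CStarAlgebra.nonneg_iff_eq_star_mul_self.mp hT.nonneg
    exact ⟨B, hB⟩
  have key : ∀ u z : Fin d → ℂ, star u ⬝ᵥ (Bᴴ * B) *ᵥ z = star (B *ᵥ u) ⬝ᵥ (B *ᵥ z) := by
    intro u z
    rw [← mulVec_mulVec, dotProduct_mulVec, star_mulVec]
  rw [key, key, key]
  exact dot_cs _ _

lemma psd_re_nonneg {T : Matrix (Fin d) (Fin d) ℂ} (hT : T.PosSemidef) (v : Fin d → ℂ) :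
    0 ≤ (star v ⬝ᵥ T *ᵥ v).re := by
  have := hT.dotProduct_mulVec_nonneg v
  rw [Complex.le_def] at this
  simpa using this.1

lemma vecMulVec_mulVec_eq (u z : Fin d → ℂ) :
    (vecMulVec u (star u)) *ᵥ z = (star u ⬝ᵥ z) • u := by
  ext i
  simp [vecMulVec_apply, Matrix.mulVec, dotProduct, Finset.mul_sum, Finset.sum_mul]
  congr 1
  ext j
  ring

lemma vecMulVec_posSemidef (u : Fin d → ℂ) :
    (vecMulVec u (star u)).PosSemidef := by
  refine Matrix.PosSemidef.of_dotProduct_mulVec_nonneg ?_ ?_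
  · ext i j
    simp [Matrix.conjTranspose_apply, vecMulVec_apply, mul_comm]
  · intro z
    rw [vecMulVec_mulVec_eq, dotProduct_smul]
    have h1 : star z ⬝ᵥ u = star (star u ⬝ᵥ z) := star_dotProduct z u
    rw [h1, smul_eq_mul, Complex.star_def, Complex.mul_conj]
    exact Complex.zero_le_real.mpr (Complex.normSq_nonneg _)

lemma one_sub_vecMulVec_posSemidef (u : Fin d → ℂ) (hu : star u ⬝ᵥ u = 1) :
    ((1 : Matrix (Fin d) (Fin d) ℂ) - vecMulVec u (star u)).PosSemidef := by
  refine Matrix.PosSemidef.of_dotProduct_mulVec_nonneg ?_ ?_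
  · exact Matrix.IsHermitian.sub Matrix.isHermitian_one (vecMulVec_posSemidef u).1
  · intro z
    rw [Matrix.sub_mulVec, Matrix.one_mulVec, dotProduct_sub, vecMulVec_mulVec_eq,
      dotProduct_smul]
    have h1 : star z ⬝ᵥ u = star (star u ⬝ᵥ z) := star_dotProduct z u
    rw [h1, smul_eq_mul, Complex.star_def, Complex.mul_conj]
    have hcs := dot_cs u z
    rw [hu] at hcs
    simp only [Complex.one_re, one_mul] at hcs
    have hreal : star z ⬝ᵥ z = ((∑ i, Complex.normSq (z i) : ℝ) : ℂ) := by
      simp only [dotProduct, Pi.star_apply]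
      push_cast
      congr 1
      ext i
      rw [Complex.star_def, ← Complex.normSq_eq_conj_mul_self]
    have hre : (star z ⬝ᵥ z).re = ∑ i, Complex.normSq (z i) := by
      rw [hreal]; exact Complex.ofReal_re _
    rw [hreal, ← Complex.ofReal_sub]
    apply Complex.zero_le_real.mpr
    rw [← hre]
    linarith [hcs]

/-! ### Lower bound -/

lemma dot_one_sub {T : Matrix (Fin d) (Fin d) ℂ} (v : Fin d → ℂ) (hv : star v ⬝ᵥ v = 1) :
    star v ⬝ᵥ (1 - T) *ᵥ v = 1 - star v ⬝ᵥ T *ᵥ v := by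
  rw [Matrix.sub_mulVec, dotProduct_sub, Matrix.one_mulVec, hv]

lemma abs_dot_le {T : Matrix (Fin d) (Fin d) ℂ} (hT : T.PosSemidef) (v w : Fin d → ℂ) :
    ‖star v ⬝ᵥ T *ᵥ w‖
      ≤ Real.sqrt (star v ⬝ᵥ T *ᵥ v).re * Real.sqrt (star w ⬝ᵥ T *ᵥ w).re := by
  have h := psd_cs hT v w
  rw [Complex.norm_def, ← Real.sqrt_mul (psd_re_nonneg hT v)]
  exact Real.sqrt_le_sqrt h

lemma qBeta_lower {x y : Fin d → ℂ} (hx : star x ⬝ᵥ x = 1) (hy : star y ⬝ᵥ y = 1)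
    {a p : ℝ} (ha : a = Complex.normSq (star x ⬝ᵥ y)) (ha0 : 0 < a) (ha1 : a < 1)
    (hp0 : 0 ≤ p) (hp1 : p ≤ 1)
    {T : Matrix (Fin d) (Fin d) ℂ} (hT : T.PosSemidef) (hT1 : (1 - T).PosSemidef)
    (hcon : (T * vecMulVec x (star x)).trace.re ≤ alphaQ p a) :
    betaQ p a ≤ 1 - (T * vecMulVec y (star y)).trace.re := by
  set α := alphaQ p a with hα
  have hα0 : 0 ≤ α := alphaQ_nonneg hp0 hp1 ha0 ha1
  have hαa : α ≤ a := alphaQ_le hp0 hp1 ha0 ha1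
  have hα1 : α ≤ 1 := le_trans hαa ha1.le
  rw [trace_mul_vecMulVec] at hcon
  rw [trace_mul_vecMulVec]
  set t := (star x ⬝ᵥ T *ᵥ x).re with htdef
  set s := (star y ⬝ᵥ T *ᵥ y).re with hsdef
  have ht0 : 0 ≤ t := psd_re_nonneg hT x
  have hs0 : 0 ≤ s := psd_re_nonneg hT y
  have ht1 : t ≤ 1 := by
    have h := psd_re_nonneg hT1 x
    rw [dot_one_sub x hx] at h
    simp only [Complex.sub_re, Complex.one_re] at h
    linarith
  have hs1 : s ≤ 1 := by
    have h := psd_re_nonneg hT1 y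
    rw [dot_one_sub y hy] at h
    simp only [Complex.sub_re, Complex.one_re] at h
    linarith
  -- Fuchs-van de Graaf type bound
  have hmain : Real.sqrt a ≤ Real.sqrt t * Real.sqrt s
      + Real.sqrt (1-t) * Real.sqrt (1-s) := by
    have hsplit : star x ⬝ᵥ y = star x ⬝ᵥ T *ᵥ y + star x ⬝ᵥ (1 - T) *ᵥ y := by
      rw [← dotProduct_add, ← Matrix.add_mulVec]
      simp
    have h1 : ‖star x ⬝ᵥ T *ᵥ y‖ ≤ Real.sqrt t * Real.sqrt s :=
      abs_dot_le hT x y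
    have h2 : ‖star x ⬝ᵥ (1-T) *ᵥ y‖ ≤ Real.sqrt (1-t) * Real.sqrt (1-s) := by
      have h := abs_dot_le hT1 x y
      rw [dot_one_sub x hx, dot_one_sub y hy] at h
      simpa using h
    have hsa : Real.sqrt a = ‖star x ⬝ᵥ y‖ := by
      rw [ha, Complex.norm_def]
    rw [hsa, hsplit]
    calc ‖star x ⬝ᵥ T *ᵥ y + star x ⬝ᵥ (1 - T) *ᵥ y‖
        ≤ ‖star x ⬝ᵥ T *ᵥ y‖ + ‖star x ⬝ᵥ (1 - T) *ᵥ y‖ :=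
          norm_add_le _ _
    _ ≤ _ := add_le_add h1 h2
  have hkey : Real.sqrt s ≤ Real.sqrt a * Real.sqrt α
      + Real.sqrt (1-a) * Real.sqrt (1-α) := by
    apply psb_key_ineq (Real.sqrt a) (Real.sqrt (1-a)) (Real.sqrt α) (Real.sqrt (1-α))
      (Real.sqrt t) (Real.sqrt (1-t)) (Real.sqrt s) (Real.sqrt (1-s))
      (Real.sqrt_nonneg _) (Real.sqrt_nonneg _) (Real.sqrt_nonneg _) (Real.sqrt_nonneg _)
      (Real.sqrt_nonneg _) (Real.sqrt_nonneg _) (Real.sqrt_nonneg _) (Real.sqrt_nonneg _)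
    · rw [Real.sq_sqrt ha0.le, Real.sq_sqrt (by linarith : (0:ℝ) ≤ 1-a)]; ring
    · rw [Real.sq_sqrt hα0, Real.sq_sqrt (by linarith : (0:ℝ) ≤ 1-α)]; ring
    · rw [Real.sq_sqrt ht0, Real.sq_sqrt (by linarith : (0:ℝ) ≤ 1-t)]; ring
    · rw [Real.sq_sqrt hs0, Real.sq_sqrt (by linarith : (0:ℝ) ≤ 1-s)]; ring
    · exact Real.sqrt_le_sqrt hαa
    · exact Real.sqrt_le_sqrt hcon
    · exact hmain
  have hs_le : s ≤ 1 - betaQ p a := by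
    rw [one_sub_betaQ hp0 hp1 ha0 ha1, ← hα]
    calc s = (Real.sqrt s)^2 := (Real.sq_sqrt hs0).symm
    _ ≤ (Real.sqrt a * Real.sqrt α + Real.sqrt (1-a) * Real.sqrt (1-α))^2 := by
        apply pow_le_pow_left₀ (Real.sqrt_nonneg _) hkey
  linarith

/-! ### Achievability -/

lemma qBeta_mem {x y : Fin d → ℂ} (hx : star x ⬝ᵥ x = 1) (hy : star y ⬝ᵥ y = 1)
    {a p : ℝ} (ha : a = Complex.normSq (star x ⬝ᵥ y)) (ha0 : 0 < a) (ha1 : a < 1)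
    (hp0 : 0 ≤ p) (hp1 : p ≤ 1) :
    ∃ T : Matrix (Fin d) (Fin d) ℂ,
      T.PosSemidef ∧ (1 - T).PosSemidef ∧
      ((T * vecMulVec x (star x)).trace.re ≤ alphaQ p a) ∧
      betaQ p a = 1 - (T * vecMulVec y (star y)).trace.re := by
  set α := alphaQ p a with hα
  have hα0 : 0 ≤ α := alphaQ_nonneg hp0 hp1 ha0 ha1
  have hαa : α ≤ a := alphaQ_le hp0 hp1 ha0 ha1
  have hα1 : α ≤ 1 := le_trans hαa ha1.le
  have ha1' : (0:ℝ) < 1 - a := by linarith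
  have haa : (0:ℝ) < a * (1-a) := by positivity
  set c : ℂ := star x ⬝ᵥ y with hc
  have hnc : Complex.normSq c = a := ha.symm
  set r : ℝ := Real.sqrt (1-α) / Real.sqrt (a*(1-a)) with hr
  have hr0 : 0 ≤ r := by positivity
  set k : ℂ := (r : ℂ) * star c with hk
  set w : Fin d → ℂ := y - c • x with hw
  set u : Fin d → ℂ := (Real.sqrt α : ℂ) • x + k • w with hu
  -- dot product facts
  have hyx : star y ⬝ᵥ x = star c := by rw [star_dotProduct y x, ← hc]
  have hcc : c * star c = (a : ℂ) := by
    rw [Complex.star_def, Complex.mul_conj, hnc]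
  have hxw : star x ⬝ᵥ w = 0 := by
    rw [hw, dotProduct_sub, dotProduct_smul, hx, ← hc]
    simp
  have hwx : star w ⬝ᵥ x = 0 := by
    rw [star_dotProduct, hxw]; simp
  have hyw : star y ⬝ᵥ w = ((1 - a : ℝ) : ℂ) := by
    rw [hw, dotProduct_sub, dotProduct_smul, hy, hyx, smul_eq_mul, hcc]
    push_cast
    try norm_num
    try ring
  have hww : star w ⬝ᵥ w = ((1 - a : ℝ) : ℂ) := by
    rw [hw, show star (y - c • x) = star y - star c • star x from by
      rw [star_sub, star_smul]]
    rw [sub_dotProduct, smul_dotProduct, ← hw, hyw, hxw]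
    try simp
  have hxu : star x ⬝ᵥ u = (Real.sqrt α : ℂ) := by
    rw [hu, dotProduct_add, dotProduct_smul, dotProduct_smul, hx, hxw]
    simp
  have hwu : star w ⬝ᵥ u = k * ((1 - a : ℝ) : ℂ) := by
    rw [hu, dotProduct_add, dotProduct_smul, dotProduct_smul, hwx, hww]
    simp
  have hyu : star y ⬝ᵥ u = star c * (((Real.sqrt α + r * (1-a)) : ℝ) : ℂ) := by
    rw [hu, dotProduct_add, dotProduct_smul, dotProduct_smul, hyx, hyw, hk]
    simp only [smul_eq_mul]
    push_cast
    ring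
  -- r^2 identity
  have hr2 : r^2 * (a * (1-a)) = 1 - α := by
    rw [hr, div_pow, Real.sq_sqrt (by linarith : (0:ℝ) ≤ 1-α),
      Real.sq_sqrt haa.le]
    field_simp
  -- norm of u
  have hnk : Complex.normSq k = r^2 * a := by
    rw [hk, Complex.normSq_mul, Complex.star_def, Complex.normSq_conj, hnc,
      Complex.normSq_ofReal]
    ring
  have huu : star u ⬝ᵥ u = 1 := by
    have hsu : star u = star ((Real.sqrt α : ℂ)) • star x + star k • star w := by
      rw [hu, star_add, star_smul, star_smul]
    rw [hu]  -- expand on the right side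
    rw [← hu, hsu, add_dotProduct, smul_dotProduct, smul_dotProduct, hxu, hwu]
    have hkk : star k * (k * ((1 - a : ℝ) : ℂ)) = ((r^2 * a * (1-a) : ℝ) : ℂ) := by
      rw [show star k * (k * ((1 - a : ℝ) : ℂ)) = k * star k * ((1 - a : ℝ) : ℂ) from by ring,
        Complex.star_def, Complex.mul_conj, hnk]
      push_cast
      ring
    rw [smul_eq_mul, smul_eq_mul, hkk]
    have hαα : (star ((Real.sqrt α : ℝ) : ℂ)) * ((Real.sqrt α : ℝ) : ℂ) = ((α : ℝ) : ℂ) := by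
      rw [Complex.star_def, Complex.conj_ofReal, ← Complex.ofReal_mul,
        Real.mul_self_sqrt hα0]
    rw [hαα, ← Complex.ofReal_add]
    have : α + r^2 * a * (1-a) = 1 := by
      have := hr2
      nlinarith [hr2]
    rw [show α + r ^ 2 * a * (1 - a) = 1 from this]
    simp
  refine ⟨vecMulVec u (star u), vecMulVec_posSemidef u,
    one_sub_vecMulVec_posSemidef u huu, ?_, ?_⟩
  · rw [trace_mul_vecMulVec, vecMulVec_mulVec_eq, dotProduct_smul, smul_eq_mul]
    have hux : star u ⬝ᵥ x = star (star x ⬝ᵥ u) := star_dotProduct u x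
    rw [hux, hxu, Complex.star_def, Complex.conj_ofReal, ← Complex.ofReal_mul,
      Real.mul_self_sqrt hα0]
    simp
  · rw [trace_mul_vecMulVec, vecMulVec_mulVec_eq, dotProduct_smul, smul_eq_mul]
    have huy : star u ⬝ᵥ y = star (star y ⬝ᵥ u) := star_dotProduct u y
    rw [huy, hyu]
    set z : ℂ := star c * (((Real.sqrt α + r * (1-a)) : ℝ) : ℂ) with hz
    have : star z * z = ((Complex.normSq z : ℝ) : ℂ) := by
      rw [Complex.star_def, show (starRingEnd ℂ) z * z = z * (starRingEnd ℂ) z from mul_comm _ _,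
        Complex.mul_conj]
    rw [this]
    have hnz : Complex.normSq z = a * (Real.sqrt α + r * (1-a))^2 := by
      rw [hz, Complex.normSq_mul, Complex.star_def, Complex.normSq_conj, hnc,
        Complex.normSq_ofReal]
      ring
    rw [hnz]
    have hfinal : a * (Real.sqrt α + r * (1-a))^2 = 1 - betaQ p a := by
      rw [one_sub_betaQ hp0 hp1 ha0 ha1, ← hα]
      have hsplit : Real.sqrt (a*(1-a)) = Real.sqrt a * Real.sqrt (1-a) :=
        Real.sqrt_mul ha0.le _
      have hra : Real.sqrt a * (r * (1-a)) = Real.sqrt (1-a) * Real.sqrt (1-α) := by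
        rw [hr, hsplit]
        rw [show Real.sqrt a * (Real.sqrt (1-α) / (Real.sqrt a * Real.sqrt (1-a)) * (1-a))
          = Real.sqrt (1-α) * ((1-a) / Real.sqrt (1-a)) * (Real.sqrt a / Real.sqrt a) from by ring]
        rw [div_self (by positivity : Real.sqrt a ≠ 0), Real.div_sqrt]
        ring
      have expand : a * (Real.sqrt α + r * (1-a))^2
          = (Real.sqrt a * Real.sqrt α + Real.sqrt a * (r * (1-a)))^2 := by
        rw [show (Real.sqrt a * Real.sqrt α + Real.sqrt a * (r * (1-a)))^2
          = (Real.sqrt a)^2 * (Real.sqrt α + r * (1-a))^2 from by ring, Real.sq_sqrt ha0.le]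
      rw [expand, hra]
    rw [hfinal]
    simp

/-! ### Main theorem -/

/-- Lemma 2: the Pareto-optimal error trade-off boundary for discrimination of
two pure states, parametrized by `p ∈ [0,1]`, with each `p` giving a distinct
point of the boundary. -/
theorem pure_state_pareto_boundary {d : ℕ} (x y : Fin d → ℂ)
    (hx : star x ⬝ᵥ x = 1) (hy : star y ⬝ᵥ y = 1)
    (a : ℝ) (ha : a = Complex.normSq (star x ⬝ᵥ y)) (ha0 : 0 < a) (ha1 : a < 1) :
    (∀ p ∈ Set.Icc (0 : ℝ) 1,
      qBeta (alphaQ p a) (vecMulVec x (star x)) (vecMulVec y (star y)) = betaQ p a) ∧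
    Set.InjOn (fun p : ℝ => (alphaQ p a, betaQ p a)) (Set.Icc (0 : ℝ) 1) := by
  constructor
  · rintro p ⟨hp0, hp1⟩
    unfold qBeta
    obtain ⟨T, h1, h2, h3, h4⟩ := qBeta_mem hx hy ha ha0 ha1 hp0 hp1
    apply le_antisymm
    · apply csInf_le
      · refine ⟨betaQ p a, ?_⟩
        rintro b ⟨T', hT1', hT2', hT3', rfl⟩
        exact qBeta_lower hx hy ha ha0 ha1 hp0 hp1 hT1' hT2' hT3'
      · exact ⟨T, h1, h2, h3, h4⟩
    · apply le_csInf
      · exact ⟨_, T, h1, h2, h3, rfl⟩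
      · rintro b ⟨T', hT1', hT2', hT3', rfl⟩
        exact qBeta_lower hx hy ha ha0 ha1 hp0 hp1 hT1' hT2' hT3'
  · rintro p ⟨hp0, hp1⟩ q ⟨hq0, hq1⟩ hpq
    simp only [Prod.mk.injEq] at hpq
    obtain ⟨hαeq, hβeq⟩ := hpq
    have hdp := disc_pos hp0 hp1 ha0 ha1
    have hdq := disc_pos hq0 hq1 ha0 ha1
    set s1 := Real.sqrt (1 - 4*p*(1-p)*a) with hs1
    set s2 := Real.sqrt (1 - 4*q*(1-q)*a) with hs2
    have hs10 : 0 < s1 := Real.sqrt_pos.mpr hdp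
    have hs20 : 0 < s2 := Real.sqrt_pos.mpr hdq
    have e1 : alphaQ p a + betaQ p a = 1 + (a-1)/s1 := by
      unfold alphaQ betaQ
      rw [← hs1]
      field_simp
      try ring
    have e2 : alphaQ q a + betaQ q a = 1 + (a-1)/s2 := by
      unfold alphaQ betaQ
      rw [← hs2]
      field_simp
      try ring
    have hss : s1 = s2 := by
      have h : (a-1)/s1 = (a-1)/s2 := by
        have h' : 1 + (a-1)/s1 = 1 + (a-1)/s2 := by rw [← e1, hαeq, hβeq, e2]
        linarith
      rw [div_eq_div_iff hs10.ne' hs20.ne'] at h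
      have := mul_left_cancel₀ (show (a-1) ≠ 0 by linarith) (by linarith [h] : (a-1)*s2 = (a-1)*s1)
      linarith
    have e3 : alphaQ p a - betaQ p a = a*(1-2*p)/s1 := by
      unfold alphaQ betaQ
      rw [← hs1]
      field_simp
      ring
    have e4 : alphaQ q a - betaQ q a = a*(1-2*q)/s2 := by
      unfold alphaQ betaQ
      rw [← hs2]
      field_simp
      ring
    have h5 : a*(1-2*p)/s1 = a*(1-2*q)/s1 := by
      rw [e3.symm, hss, ← e4, hαeq, hβeq]
    field_simp at h5
    linarith
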